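/- Let n ≥ 1, let h: ℝ^n → ℝ be convex, let x₀ ∈ ℝ^n, let p ≥ 1 be an integer, and let θ_i ≥ 0 for i = 2,…,p+1. Define d_i(x) = (1/i)‖x‖^i and h̄(x) = h(x) + Σ_{i=2}^{p+1} θ_i d_i(x − x₀). If x̄ is a global minimizer of h̄ over ℝ^n, then for all x ∈ ℝ^n, h̄(x) ≥ h̄(x̄) + Σ_{i=2}^{p+1} (1/2)^{i−2} θ_i d_i(x − x̄). -/

import Mathlib

open Finset
open RealInnerProductSpace

variable {E : Type*} [NormedAddCommGroup E] [InnerProductSpace ℝ E]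

-- Lemma A: derivative of t ↦ ‖y + t • w‖ ^ p
lemma hasDerivAt_norm_pow (p : ℕ) (hp : 2 ≤ p) (y w : E) (t₀ : ℝ) :
    HasDerivAt (fun t : ℝ => ‖y + t • w‖ ^ p)
      ((p : ℝ) * ‖y + t₀ • w‖ ^ (p - 2) * ⟪y + t₀ • w, w⟫) t₀ := by
  by_cases ha : y + t₀ • w = 0
  · -- degenerate case: y + t₀ • w = 0
    have h0 : (p : ℝ) * ‖y + t₀ • w‖ ^ (p - 2) * ⟪y + t₀ • w, w⟫ = 0 := by
      rw [ha]; simp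
    rw [h0, hasDerivAt_iff_isLittleO]
    have hf : ∀ t : ℝ, ‖y + t • w‖ ^ p = |t - t₀| ^ p * ‖w‖ ^ p := by
      intro t
      have : y + t • w = (t - t₀) • w := by
        have hy : y = -(t₀ • w) := by linear_combination (norm := module) ha
        rw [hy, sub_smul]; module
      rw [this, norm_smul, Real.norm_eq_abs, mul_pow]
    have hmain : (fun t : ℝ => |t - t₀| ^ p * ‖w‖ ^ p) =o[nhds t₀] fun t => t - t₀ := by
      rw [Asymptotics.isLittleO_iff_tendsto']
      · refine squeeze_zero_norm (a := fun t => |t - t₀| ^ (p - 1) * ‖w‖ ^ p) (fun t => ?_) ?_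
        · show _ ≤ _
          by_cases ht : t = t₀
          · simp [ht]; positivity
          · have hne : t - t₀ ≠ 0 := sub_ne_zero.mpr ht
            have habs : (0:ℝ) < |t - t₀| := abs_pos.mpr hne
            rw [Real.norm_eq_abs, abs_div, abs_mul, abs_pow, abs_abs, abs_pow,
              abs_of_nonneg (norm_nonneg w)]
            rw [div_le_iff₀ habs]
            have h1 : |t - t₀| ^ p = |t - t₀| ^ (p - 1) * |t - t₀| := by
              rw [← pow_succ]; congr 1; omega
            rw [h1]; ring_nf; exact le_rfl
        · have hc : Continuous (fun t : ℝ => |t - t₀| ^ (p - 1) * ‖w‖ ^ p) := by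
            fun_prop
          have := hc.tendsto t₀
          simpa [show p - 1 ≠ 0 by omega] using this
      · filter_upwards with t ht
        have : t = t₀ := by linarith [sub_eq_zero.mp ht]
        simp [this, show p ≠ 0 by omega]
    have heq : (fun t : ℝ => ‖y + t • w‖ ^ p - ‖y + t₀ • w‖ ^ p - (t - t₀) • (0:ℝ))
        = fun t : ℝ => |t - t₀| ^ p * ‖w‖ ^ p := by
      funext t
      rw [hf t, ha]
      simp [show p ≠ 0 by omega]
    rw [heq]
    exact hmain
  · set a := y + t₀ • w with hadef
    have hφ : ∀ t : ℝ, ‖y + t • w‖ ^ 2 = ‖y‖ ^ 2 + (2 * ⟪y, w⟫) * t + ‖w‖ ^ 2 * t ^ 2 := by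
      intro t
      rw [norm_add_sq_real, real_inner_smul_right, norm_smul]
      simp [mul_pow]; ring
    have hφd : HasDerivAt (fun t : ℝ => ‖y‖ ^ 2 + (2 * ⟪y, w⟫) * t + ‖w‖ ^ 2 * t ^ 2)
        (2 * ⟪y, w⟫ + ‖w‖ ^ 2 * (2 * t₀)) t₀ := by
      simpa using (((hasDerivAt_id t₀).const_mul (2 * ⟪y, w⟫)).const_add (‖y‖^2)).fun_add
        (((hasDerivAt_pow 2 t₀)).const_mul (‖w‖^2))
    have hpos : (0:ℝ) < ‖y‖ ^ 2 + (2 * ⟪y, w⟫) * t₀ + ‖w‖ ^ 2 * t₀ ^ 2 := by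
      rw [← hφ]; exact pow_pos (norm_pos_iff.mpr ha) 2
    have hsq : HasDerivAt (fun t : ℝ => Real.sqrt (‖y‖ ^ 2 + (2 * ⟪y, w⟫) * t + ‖w‖ ^ 2 * t ^ 2))
        ((2 * ⟪y, w⟫ + ‖w‖ ^ 2 * (2 * t₀)) / (2 * Real.sqrt (‖y‖ ^ 2 + (2 * ⟪y, w⟫) * t₀ + ‖w‖ ^ 2 * t₀ ^ 2))) t₀ :=
      hφd.sqrt hpos.ne'
    have key := hsq.fun_pow p
    have hsqrt : ∀ t : ℝ, Real.sqrt (‖y‖ ^ 2 + (2 * ⟪y, w⟫) * t + ‖w‖ ^ 2 * t ^ 2) = ‖y + t • w‖ := by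
      intro t; rw [← hφ, Real.sqrt_sq (norm_nonneg _)]
    have key2 : HasDerivAt (fun t : ℝ => ‖y + t • w‖ ^ p)
        ((p:ℝ) * ‖a‖ ^ (p-1) * ((2 * ⟪y, w⟫ + ‖w‖ ^ 2 * (2 * t₀)) / (2 * ‖a‖))) t₀ := by
      have := key
      simp only [hsqrt] at this
      convert this using 2
    convert key2 using 1
    have hna : ‖a‖ ≠ 0 := norm_ne_zero_iff.mpr ha
    have hinner : ⟪a, w⟫ = ⟪y, w⟫ + t₀ * ‖w‖^2 := by
      rw [hadef, inner_add_left, real_inner_smul_left, real_inner_self_eq_norm_sq]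
    have hpow : ‖a‖ ^ (p-1) = ‖a‖ ^ (p-2) * ‖a‖ := by
      rw [← pow_succ]; congr 1; omega
    rw [hinner, hpow]
    field_simp

-- midpoint power inequality
lemma half_pow_le (k : ℕ) {α β : ℝ} (hα : 0 ≤ α) (hβ : 0 ≤ β) :
    ((α + β) / 2) ^ k ≤ (α ^ k + β ^ k) / 2 := by
  have hc := (convexOn_pow k).2 (Set.mem_Ici.mpr hα) (Set.mem_Ici.mpr hβ)
    (by norm_num : (0:ℝ) ≤ 1/2) (by norm_num : (0:ℝ) ≤ 1/2) (by norm_num)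
  simp only [smul_eq_mul] at hc
  calc ((α + β)/2)^k = (1/2*α + 1/2*β)^k := by ring_nf
    _ ≤ 1/2*α^k + 1/2*β^k := hc
    _ = (α^k + β^k)/2 := by ring

-- Lemma B: monotonicity of the gradient of ‖·‖^p
lemma grad_mono (p : ℕ) (hp : 2 ≤ p) (a b : E) :
    (1/2 : ℝ) ^ (p - 2) * ‖a - b‖ ^ p
      ≤ ‖a‖ ^ (p-2) * ⟪a, a - b⟫ - ‖b‖ ^ (p-2) * ⟪b, a - b⟫ := by
  set α := ‖a‖ with hα
  set β := ‖b‖ with hβ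
  set r := ‖a - b‖ with hr
  have hα0 : 0 ≤ α := norm_nonneg _
  have hβ0 : 0 ≤ β := norm_nonneg _
  have hr0 : 0 ≤ r := norm_nonneg _
  have hrsq : r ^ 2 = α ^ 2 - 2 * ⟪a, b⟫ + β ^ 2 := by
    rw [hr, hα, hβ]; exact norm_sub_sq_real a b
  have h1 : ⟪a, a - b⟫ = α^2 - ⟪a, b⟫ := by
    rw [inner_sub_right, real_inner_self_eq_norm_sq]
  have h2 : ⟪b, a - b⟫ = ⟪a, b⟫ - β^2 := by
    rw [inner_sub_right, real_inner_self_eq_norm_sq, real_inner_comm]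
  rw [h1, h2]
  -- RHS = (α^{p-2}-β^{p-2})(α²-β²)/2 + (α^{p-2}+β^{p-2}) r²/2
  have hRHS : α ^ (p-2) * (α^2 - ⟪a, b⟫) - β ^ (p-2) * (⟪a, b⟫ - β^2)
      = (α^(p-2) - β^(p-2)) * (α^2 - β^2) / 2 + (α^(p-2) + β^(p-2)) * r^2 / 2 := by
    rw [hrsq]; ring
  rw [hRHS]
  have hpos1 : 0 ≤ (α^(p-2) - β^(p-2)) * (α^2 - β^2) := by
    rcases le_total α β with hab | hab
    · have h3 : α^(p-2) ≤ β^(p-2) := pow_le_pow_left₀ hα0 hab _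
      have h4 : α^2 ≤ β^2 := pow_le_pow_left₀ hα0 hab _
      nlinarith
    · have h3 : β^(p-2) ≤ α^(p-2) := pow_le_pow_left₀ hβ0 hab _
      have h4 : β^2 ≤ α^2 := pow_le_pow_left₀ hβ0 hab _
      nlinarith
  have hkey : (1/2:ℝ)^(p-2) * r^p ≤ (α^(p-2) + β^(p-2)) * r^2 / 2 := by
    have hrp : r ^ p = r ^ (p-2) * r ^ 2 := by rw [← pow_add]; congr 1; omega
    have htri : r ≤ α + β := by rw [hr, hα, hβ]; exact norm_sub_le a b
    have hmid : (r/2)^(p-2) ≤ (α^(p-2) + β^(p-2))/2 := by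
      calc (r/2)^(p-2) ≤ ((α+β)/2)^(p-2) := by
            apply pow_le_pow_left₀ (by positivity) (by linarith)
        _ ≤ (α^(p-2) + β^(p-2))/2 := half_pow_le _ hα0 hβ0
    calc (1/2:ℝ)^(p-2) * r^p = (r/2)^(p-2) * r^2 := by
          rw [hrp, div_pow]; rw [div_pow, one_pow]; ring
      _ ≤ ((α^(p-2) + β^(p-2))/2) * r^2 := by
          apply mul_le_mul_of_nonneg_right hmid (by positivity)
      _ = (α^(p-2) + β^(p-2)) * r^2 / 2 := by ring
  linarith

-- Lemma C: uniform convexity of ‖·‖^p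
lemma unif_convex_pow (p : ℕ) (hp : 2 ≤ p) (y x : E) :
    ‖y‖ ^ p + p * ‖y‖ ^ (p-2) * ⟪y, x - y⟫ + (1/2 : ℝ) ^ (p-2) * ‖x - y‖ ^ p
      ≤ ‖x‖ ^ p := by
  set w := x - y with hw
  set F := fun t : ℝ => ‖y + t • w‖ ^ p with hF
  set F' := fun t : ℝ => (p : ℝ) * ‖y + t • w‖ ^ (p-2) * ⟪y + t • w, w⟫ with hF'
  have hderiv : ∀ t ∈ Set.uIcc (0:ℝ) 1, HasDerivAt F (F' t) t := fun t _ =>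
    hasDerivAt_norm_pow p hp y w t
  have hcont : Continuous F' := by
    apply Continuous.mul
    · fun_prop
    · exact (continuous_const.add (continuous_id.smul continuous_const)).inner continuous_const
  have hFTC : ∫ t in (0:ℝ)..1, F' t = F 1 - F 0 :=
    intervalIntegral.integral_eq_sub_of_hasDerivAt hderiv (hcont.intervalIntegrable 0 1)
  -- pointwise lower bound on F'
  have hbound : ∀ t ∈ Set.Icc (0:ℝ) 1,
      F' 0 + (p : ℝ) * (1/2)^(p-2) * t^(p-1) * ‖w‖^p ≤ F' t := by
    intro t ht
    rcases eq_or_lt_of_le ht.1 with h0 | h0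
    · rw [← h0]
      simp [show p - 1 ≠ 0 by omega]
    · have key := grad_mono p hp (y + t • w) y
      have hsub : (y + t • w) - y = t • w := by abel
      rw [hsub] at key
      have hnorm : ‖t • w‖ = t * ‖w‖ := by
        rw [norm_smul, Real.norm_eq_abs, abs_of_pos h0]
      have hin1 : ⟪y + t • w, t • w⟫ = t * ⟪y + t • w, w⟫ := real_inner_smul_right _ _ _
      have hin2 : ⟪y, t • w⟫ = t * ⟪y, w⟫ := real_inner_smul_right _ _ _
      rw [hnorm, hin1, hin2, mul_pow] at key
      have htp : t ^ p = t ^ (p-1) * t := by rw [← pow_succ]; congr 1; omega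
      have key2 : (1/2:ℝ)^(p-2)*t^(p-1)*‖w‖^p
          ≤ ‖y + t • w‖^(p-2)*⟪y + t • w, w⟫ - ‖y‖^(p-2)*⟪y, w⟫ := by
        apply le_of_mul_le_mul_left _ h0
        calc t * ((1/2:ℝ)^(p-2)*t^(p-1)*‖w‖^p) = (1/2:ℝ)^(p-2) * (t^p*‖w‖^p) := by
              rw [htp]; ring
          _ ≤ ‖y + t • w‖ ^ (p-2) * (t * ⟪y + t • w, w⟫) - ‖y‖ ^ (p-2) * (t * ⟪y, w⟫) := key
          _ = t * (‖y + t • w‖^(p-2)*⟪y + t • w, w⟫ - ‖y‖^(p-2)*⟪y, w⟫) := by ring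
      have hF't : F' t = (p:ℝ) * ‖y + t • w‖ ^ (p-2) * ⟪y + t • w, w⟫ := rfl
      have hF'0 : F' 0 = (p:ℝ) * ‖y‖ ^ (p-2) * ⟪y, w⟫ := by
        simp [hF']
      rw [hF't, hF'0]
      have hp0 : (0:ℝ) ≤ p := by positivity
      nlinarith [mul_le_mul_of_nonneg_left key2 hp0]
  -- integrate the bound
  have hint1 : IntervalIntegrable (fun t : ℝ => F' 0 + (p:ℝ)*(1/2)^(p-2)*t^(p-1)*‖w‖^p)
      MeasureTheory.volume 0 1 := by
    apply Continuous.intervalIntegrable; fun_prop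
  have hmono : ∫ t in (0:ℝ)..1, (F' 0 + (p:ℝ)*(1/2)^(p-2)*t^(p-1)*‖w‖^p)
      ≤ ∫ t in (0:ℝ)..1, F' t := by
    apply intervalIntegral.integral_mono_on (by norm_num) hint1
      (hcont.intervalIntegrable 0 1) hbound
  have hidx : p - 1 + 1 = p := by omega
  have hcomp : ∫ t in (0:ℝ)..1, (F' 0 + (p:ℝ)*(1/2)^(p-2)*t^(p-1)*‖w‖^p)
      = F' 0 + (1/2:ℝ)^(p-2) * ‖w‖^p := by
    rw [intervalIntegral.integral_add (by apply Continuous.intervalIntegrable; fun_prop)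
      (by apply Continuous.intervalIntegrable; fun_prop)]
    rw [intervalIntegral.integral_const]
    have heq : ∫ t in (0:ℝ)..1, (p:ℝ)*(1/2)^(p-2)*t^(p-1)*‖w‖^p
        = ((p:ℝ)*(1/2)^(p-2)*‖w‖^p) * ∫ t in (0:ℝ)..1, t^(p-1) := by
      rw [← intervalIntegral.integral_const_mul]
      congr 1; funext t; ring
    rw [heq, integral_pow, hidx]
    have hpne : ((p:ℕ):ℝ) ≠ 0 := by positivity
    rw [one_pow, zero_pow (show p ≠ 0 by omega)]
    field_simp
    rw [Nat.cast_sub (by omega : 1 ≤ p), Nat.cast_one]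
    ring
  have hF1 : F 1 = ‖x‖ ^ p := by
    simp only [hF, one_smul, hw]
    congr 2
    abel
  have hF0 : F 0 = ‖y‖ ^ p := by simp [hF]
  have hF'0 : F' 0 = (p:ℝ) * ‖y‖ ^ (p-2) * ⟪y, w⟫ := by simp [hF']
  have := hmono
  rw [hcomp, hFTC, hF1, hF0, hF'0] at this
  linarith


/-- Regularized minimizer lemma: if `x̄` minimizes
`h̄(x) = h(x) + Σ_{i=2}^{p+1} θ_i d_i(x - x₀)` with `h` convex and
`d_i(x) = (1/i)‖x‖^i`, then `h̄(x) ≥ h̄(x̄) + Σ_{i=2}^{p+1} (1/2)^{i-2} θ_i d_i(x - x̄)`. -/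
theorem regularized_minimizer_growth
    (n : ℕ) (hn : 1 ≤ n) (h : EuclideanSpace ℝ (Fin n) → ℝ)
    (hconv : ConvexOn ℝ Set.univ h)
    (x₀ : EuclideanSpace ℝ (Fin n)) (p : ℕ) (hp : 1 ≤ p)
    (θ : ℕ → ℝ) (hθ : ∀ i ∈ Finset.Icc 2 (p + 1), 0 ≤ θ i)
    (xb : EuclideanSpace ℝ (Fin n))
    (hmin : ∀ x : EuclideanSpace ℝ (Fin n),
      h xb + ∑ i ∈ Finset.Icc 2 (p + 1), θ i * ((1 / (i : ℝ)) * ‖xb - x₀‖ ^ i)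
        ≤ h x + ∑ i ∈ Finset.Icc 2 (p + 1), θ i * ((1 / (i : ℝ)) * ‖x - x₀‖ ^ i)) :
    ∀ x : EuclideanSpace ℝ (Fin n),
      h x + ∑ i ∈ Finset.Icc 2 (p + 1), θ i * ((1 / (i : ℝ)) * ‖x - x₀‖ ^ i)
        ≥ (h xb + ∑ i ∈ Finset.Icc 2 (p + 1), θ i * ((1 / (i : ℝ)) * ‖xb - x₀‖ ^ i))
          + ∑ i ∈ Finset.Icc 2 (p + 1),
              ((1 / 2 : ℝ)) ^ (i - 2) * θ i * ((1 / (i : ℝ)) * ‖x - xb‖ ^ i) := by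
  intro x
  set b : EuclideanSpace ℝ (Fin n) := xb - x₀ with hb
  set w : EuclideanSpace ℝ (Fin n) := x - xb with hw
  have e1 : x - x₀ = b + w := by rw [hb, hw]; abel
  set D : ℝ := ∑ i ∈ Finset.Icc 2 (p + 1), θ i * (‖b‖ ^ (i - 2) * ⟪b, w⟫) with hD
  -- Step 1: first-order optimality : 0 ≤ h x - h xb + D
  have step1 : 0 ≤ h x - h xb + D := by
    set H : ℝ → ℝ := fun l => h xb + l * (h x - h xb)
      + ∑ i ∈ Finset.Icc 2 (p + 1), θ i * ((1 / (i : ℝ)) * ‖b + l • w‖ ^ i) with hH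
    have hHd : HasDerivAt H (h x - h xb + D) 0 := by
      have h1 : HasDerivAt (fun l : ℝ => h xb + l * (h x - h xb)) (h x - h xb) 0 :=
        (hasDerivAt_mul_const (h x - h xb)).const_add (h xb)
      have h2 : HasDerivAt (fun l : ℝ => ∑ i ∈ Finset.Icc 2 (p + 1),
          θ i * ((1 / (i : ℝ)) * ‖b + l • w‖ ^ i)) D 0 := by
        rw [hD]
        apply HasDerivAt.fun_sum
        intro i hi
        have hi2 : 2 ≤ i := (Finset.mem_Icc.mp hi).1
        have hi0 : (i : ℝ) ≠ 0 := by positivity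
        have hA := hasDerivAt_norm_pow i hi2 b w 0
        simp only [zero_smul, add_zero] at hA
        have := hA.const_mul (θ i * (1 / (i : ℝ)))
        convert this using 1
        · rfl
        · funext l; ring
        · field_simp
      exact h1.add h2
    have hmin' : ∀ l ∈ Set.Ioc (0:ℝ) 1, H 0 ≤ H l := by
      intro l hl
      have hl0 : 0 < l := hl.1
      have hl1 : l ≤ 1 := hl.2
      set z : EuclideanSpace ℝ (Fin n) := xb + l • w with hz
      have hz1 : z - x₀ = b + l • w := by rw [hz, hb]; abel
      have hzc : z = (1 - l) • xb + l • x := by rw [hz, hw]; module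
      have hz2 : h z ≤ h xb + l * (h x - h xb) := by
        have := hconv.2 (Set.mem_univ xb) (Set.mem_univ x)
          (by linarith : (0:ℝ) ≤ 1 - l) (le_of_lt hl0) (by ring)
        rw [← hzc] at this
        calc h z ≤ (1 - l) * h xb + l * h x := by simpa using this
          _ = h xb + l * (h x - h xb) := by ring
      have hH0 : H 0 = h xb + ∑ i ∈ Finset.Icc 2 (p + 1),
          θ i * ((1 / (i : ℝ)) * ‖xb - x₀‖ ^ i) := by
        simp [hH, hb]
      have hHl : H l = h xb + l * (h x - h xb) + ∑ i ∈ Finset.Icc 2 (p + 1),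
          θ i * ((1 / (i : ℝ)) * ‖z - x₀‖ ^ i) := by
        rw [hH]; simp only [hz1]
      rw [hH0, hHl]
      calc h xb + ∑ i ∈ Finset.Icc 2 (p + 1), θ i * ((1 / (i : ℝ)) * ‖xb - x₀‖ ^ i)
          ≤ h z + ∑ i ∈ Finset.Icc 2 (p + 1), θ i * ((1 / (i : ℝ)) * ‖z - x₀‖ ^ i) := hmin z
        _ ≤ h xb + l * (h x - h xb) + ∑ i ∈ Finset.Icc 2 (p + 1),
            θ i * ((1 / (i : ℝ)) * ‖z - x₀‖ ^ i) := by linarith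
    -- derivative at an interior min of the right-interval is nonneg
    have hslope := hasDerivAt_iff_tendsto_slope.mp hHd
    have hslope' : Filter.Tendsto (slope H 0) (nhdsWithin 0 (Set.Ioi 0))
        (nhds (h x - h xb + D)) :=
      hslope.mono_left (nhdsWithin_mono 0 (fun y hy =>
        Set.mem_compl_singleton_iff.mpr (ne_of_gt hy)))
    apply ge_of_tendsto hslope'
    filter_upwards [Ioc_mem_nhdsGT_of_mem ⟨le_refl (0:ℝ), zero_lt_one⟩] with l hl
    have hge : 0 ≤ H l - H 0 := by linarith [hmin' l hl]
    rw [slope_def_field, sub_zero]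
    exact div_nonneg hge hl.1.le
  -- Step 2: uniform convexity of each d_i, summed
  have step2 : ∑ i ∈ Finset.Icc 2 (p + 1), θ i * ((1 / (i : ℝ)) * ‖b‖ ^ i) + D
        + ∑ i ∈ Finset.Icc 2 (p + 1), (1/2 : ℝ) ^ (i - 2) * θ i * ((1 / (i : ℝ)) * ‖w‖ ^ i)
      ≤ ∑ i ∈ Finset.Icc 2 (p + 1), θ i * ((1 / (i : ℝ)) * ‖b + w‖ ^ i) := by
    rw [hD, ← Finset.sum_add_distrib, ← Finset.sum_add_distrib]
    apply Finset.sum_le_sum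
    intro i hi
    have hi2 : 2 ≤ i := (Finset.mem_Icc.mp hi).1
    have hi0 : (i : ℝ) ≠ 0 := by positivity
    have hθi : 0 ≤ θ i := hθ i hi
    have hC := unif_convex_pow i hi2 b (b + w)
    rw [add_sub_cancel_left] at hC
    have hc : 0 ≤ θ i * (1 / (i : ℝ)) := by positivity
    have hmul := mul_le_mul_of_nonneg_left hC hc
    calc θ i * ((1 / (i : ℝ)) * ‖b‖ ^ i) + θ i * (‖b‖ ^ (i - 2) * ⟪b, w⟫)
          + (1/2 : ℝ) ^ (i - 2) * θ i * ((1 / (i : ℝ)) * ‖w‖ ^ i)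
        = θ i * (1 / (i : ℝ)) * (‖b‖ ^ i + (i : ℝ) * ‖b‖ ^ (i - 2) * ⟪b, w⟫
            + (1/2 : ℝ) ^ (i - 2) * ‖w‖ ^ i) := by field_simp
      _ ≤ θ i * (1 / (i : ℝ)) * ‖b + w‖ ^ i := hmul
      _ = θ i * ((1 / (i : ℝ)) * ‖b + w‖ ^ i) := by ring
  -- combine
  rw [ge_iff_le, e1]
  linarith [step1, step2]
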